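/- For any two points x, x' on the unit sphere S^m ⊂ ℝ^{m+1}, there exists a rotation R ∈ SO(m+1) such that R x = x' and the minimum over y ∈ S^m of ⟨y, R y⟩ equals ⟨x, x'⟩. -/

import Mathlib

open scoped RealInnerProductSpace Matrix

namespace Stmt9Aux

open Matrix

variable {n : ℕ}

noncomputable def hh (v : Fin n → ℝ) : Matrix (Fin n) (Fin n) ℝ :=
  1 - (2 / (v ⬝ᵥ v)) • vecMulVec v v

lemma hh_transpose (v : Fin n → ℝ) : (hh v)ᵀ = hh v := by
  have : (vecMulVec v v)ᵀ = vecMulVec v v := by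
    ext i j; simp [vecMulVec_apply, mul_comm]
  simp [hh, transpose_sub, transpose_smul, this]

lemma vmv_mul_vmv (v : Fin n → ℝ) :
    vecMulVec v v * vecMulVec v v = (v ⬝ᵥ v) • vecMulVec v v := by
  ext i j
  simp only [mul_apply, vecMulVec_apply, Matrix.smul_apply, smul_eq_mul, dotProduct, Finset.sum_mul]
  exact Finset.sum_congr rfl fun k _ => by ring

lemma hh_mul_self {v : Fin n → ℝ} (hv : v ⬝ᵥ v ≠ 0) : hh v * hh v = 1 := by
  rw [hh, sub_mul, mul_sub, mul_sub, mul_one, one_mul]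
  simp only [Matrix.smul_mul, Matrix.mul_smul, mul_one, vmv_mul_vmv, smul_smul]
  have h : 2 / (v ⬝ᵥ v) * (2 / (v ⬝ᵥ v) * (v ⬝ᵥ v)) = 2 / (v ⬝ᵥ v) + 2 / (v ⬝ᵥ v) := by
    field_simp; ring
  rw [h, add_smul]
  abel

lemma hh_det {v : Fin n → ℝ} (hv : v ⬝ᵥ v ≠ 0) : (hh v).det = -1 := by
  have h1 : hh v = 1 + replicateCol Unit ((-(2 / (v ⬝ᵥ v))) • v) * replicateRow Unit v := by
    rw [hh, vecMulVec_eq Unit, sub_eq_add_neg, ← neg_smul, replicateCol_smul, Matrix.smul_mul]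
  rw [h1, det_one_add_replicateCol_mul_replicateRow, dotProduct_smul]
  field_simp
  ring_nf; rw [mul_inv_cancel₀ hv]; norm_num

lemma vmv_mulVec (v w y : Fin n → ℝ) : vecMulVec v w *ᵥ y = (w ⬝ᵥ y) • v := by
  ext i
  simp only [mulVec, dotProduct, vecMulVec_apply, Pi.smul_apply, smul_eq_mul, Finset.mul_sum]
  rw [Finset.sum_mul]
  exact Finset.sum_congr rfl fun k _ => by ring

lemma hh_mulVec (v y : Fin n → ℝ) : hh v *ᵥ y = y - (2 * (v ⬝ᵥ y) / (v ⬝ᵥ v)) • v := by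
  rw [hh, sub_mulVec, one_mulVec, smul_mulVec, vmv_mulVec, smul_smul]
  rw [div_mul_eq_mul_div, mul_div_assoc]

lemma dot_self_nonneg (v : Fin n → ℝ) : 0 ≤ v ⬝ᵥ v :=
  Finset.sum_nonneg fun _ _ => mul_self_nonneg _

lemma quad_ineq (u w y : Fin n → ℝ) (hu : u ⬝ᵥ u = 1) (hw : w ⬝ᵥ w = 1)
    (hy : y ⬝ᵥ y = 1) (hc : (u ⬝ᵥ w) ^ 2 < 1) :
    (y ⬝ᵥ u) ^ 2 + (y ⬝ᵥ w) ^ 2 - 2 * (y ⬝ᵥ u) * (y ⬝ᵥ w) * (u ⬝ᵥ w) ≤ 1 - (u ⬝ᵥ w) ^ 2 := by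
  have h0 := dot_self_nonneg
    ((1 - (u ⬝ᵥ w) ^ 2) • y - ((y ⬝ᵥ u) - (y ⬝ᵥ w) * (u ⬝ᵥ w)) • u
      - ((y ⬝ᵥ w) - (y ⬝ᵥ u) * (u ⬝ᵥ w)) • w)
  simp only [sub_dotProduct, dotProduct_sub, smul_dotProduct, dotProduct_smul,
    smul_eq_mul] at h0
  rw [dotProduct_comm u y, dotProduct_comm w y, dotProduct_comm w u, hu, hw, hy] at h0
  nlinarith [h0, hc]

lemma inner_eq_dot (a b : EuclideanSpace ℝ (Fin n)) :
    ⟪a, b⟫ = (WithLp.equiv 2 (Fin n → ℝ) a) ⬝ᵥ (WithLp.equiv 2 (Fin n → ℝ) b) := by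
  simp [PiLp.inner_apply, dotProduct, RCLike.inner_apply, conj_trivial, mul_comm]

lemma dot_self_of_sphere (a : Metric.sphere (0 : EuclideanSpace ℝ (Fin n)) 1) :
    (WithLp.equiv 2 (Fin n → ℝ) (a : EuclideanSpace ℝ (Fin n))) ⬝ᵥ
      (WithLp.equiv 2 (Fin n → ℝ) (a : EuclideanSpace ℝ (Fin n))) = 1 := by
  rw [← inner_eq_dot, real_inner_self_eq_norm_sq]
  have : ‖(a : EuclideanSpace ℝ (Fin n))‖ = 1 := by
    simpa [Metric.mem_sphere, dist_eq_norm] using a.2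
  rw [this]; norm_num

/-- Reduction of the statement to plain dot-product facts. -/
lemma build (x x' : Metric.sphere (0 : EuclideanSpace ℝ (Fin n)) 1)
    (R : Matrix (Fin n) (Fin n) ℝ) (h1 : Rᵀ * R = 1) (h2 : R.det = 1)
    (h3 : R *ᵥ (WithLp.equiv 2 (Fin n → ℝ) (x : EuclideanSpace ℝ (Fin n)))
        = WithLp.equiv 2 (Fin n → ℝ) (x' : EuclideanSpace ℝ (Fin n)))
    (h4 : ∀ y : Fin n → ℝ, y ⬝ᵥ y = 1 →
      (WithLp.equiv 2 (Fin n → ℝ) (x : EuclideanSpace ℝ (Fin n))) ⬝ᵥ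
        (WithLp.equiv 2 (Fin n → ℝ) (x' : EuclideanSpace ℝ (Fin n))) ≤ y ⬝ᵥ (R *ᵥ y)) :
    Rᵀ * R = 1 ∧ R.det = 1 ∧
      Matrix.toEuclideanLin R (x : EuclideanSpace ℝ (Fin n)) =
        (x' : EuclideanSpace ℝ (Fin n)) ∧
      IsLeast {r : ℝ | ∃ y : Metric.sphere (0 : EuclideanSpace ℝ (Fin n)) 1,
          r = ⟪(y : EuclideanSpace ℝ (Fin n)),
                Matrix.toEuclideanLin R (y : EuclideanSpace ℝ (Fin n))⟫}
        ⟪(x : EuclideanSpace ℝ (Fin n)), (x' : EuclideanSpace ℝ (Fin n))⟫ := by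
  have hmap : Matrix.toEuclideanLin R (x : EuclideanSpace ℝ (Fin n)) =
      (x' : EuclideanSpace ℝ (Fin n)) := by
    rw [Matrix.toEuclideanLin_apply, show R *ᵥ (x : EuclideanSpace ℝ (Fin n)).ofLp = _ from h3]
    rfl
  refine ⟨h1, h2, hmap, ⟨x, ?_⟩, ?_⟩
  · rw [hmap]
  · rintro r ⟨y, rfl⟩
    rw [inner_eq_dot, inner_eq_dot]
    exact h4 _ (dot_self_of_sphere y)

end Stmt9Aux
set_option maxHeartbeats 2000000 in
open Matrix Stmt9Aux FiniteDimensional in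
/-- for any two points `x, x'` on the unit sphere `S^m ⊆ ℝ^{m+1}` there is a
rotation `R ∈ SO(m+1)` with `R x = x'` such that the minimum of `⟨y, R y⟩` over
`y ∈ S^m` equals `⟨x, x'⟩`. -/
theorem stmt_9 (m : ℕ) (hm : 1 ≤ m)
    (x x' : Metric.sphere (0 : EuclideanSpace ℝ (Fin (m + 1))) 1) :
    ∃ R : Matrix (Fin (m + 1)) (Fin (m + 1)) ℝ,
      Rᵀ * R = 1 ∧ R.det = 1 ∧
      Matrix.toEuclideanLin R (x : EuclideanSpace ℝ (Fin (m + 1))) =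
        (x' : EuclideanSpace ℝ (Fin (m + 1))) ∧
      IsLeast {r : ℝ | ∃ y : Metric.sphere (0 : EuclideanSpace ℝ (Fin (m + 1))) 1,
          r = ⟪(y : EuclideanSpace ℝ (Fin (m + 1))),
                Matrix.toEuclideanLin R (y : EuclideanSpace ℝ (Fin (m + 1)))⟫}
        ⟪(x : EuclideanSpace ℝ (Fin (m + 1))), (x' : EuclideanSpace ℝ (Fin (m + 1)))⟫ := by
  classical
  set xv : Fin (m + 1) → ℝ :=
    WithLp.equiv 2 (Fin (m + 1) → ℝ) (x : EuclideanSpace ℝ (Fin (m + 1))) with hxvdef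
  set xv' : Fin (m + 1) → ℝ :=
    WithLp.equiv 2 (Fin (m + 1) → ℝ) (x' : EuclideanSpace ℝ (Fin (m + 1))) with hxv'def
  have hxx : xv ⬝ᵥ xv = 1 := dot_self_of_sphere x
  have hx'x' : xv' ⬝ᵥ xv' = 1 := dot_self_of_sphere x'
  by_cases hA : (x' : EuclideanSpace ℝ (Fin (m + 1))) = (x : EuclideanSpace ℝ (Fin (m + 1)))
  · -- R = 1
    have hxveq : xv' = xv := by rw [hxv'def, hxvdef, hA]
    refine ⟨1, build x x' 1 (by simp) (by simp) (by simp only [← hxvdef, ← hxv'def]; rw [one_mulVec, hxveq]) ?_⟩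
    intro y hy
    simp only [← hxvdef, ← hxv'def]
    rw [one_mulVec, hy, hxveq, hxx]
  by_cases hB : (x' : EuclideanSpace ℝ (Fin (m + 1))) = -(x : EuclideanSpace ℝ (Fin (m + 1)))
  · -- rotation by π in a plane containing x
    have hxveq : xv' = -xv := by rw [hxv'def, hxvdef, hB]; rfl
    have hx0 : (x : EuclideanSpace ℝ (Fin (m + 1))) ≠ 0 := by
      intro h
      rw [hxvdef, h] at hxx
      simpa using hxx
    haveI := Fact.mk (finrank_euclideanSpace_fin (𝕜 := ℝ) (n := m + 1))
    have hrank : Module.finrank ℝ ((ℝ ∙ (x : EuclideanSpace ℝ (Fin (m + 1))))ᗮ) = m :=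
      Submodule.finrank_orthogonal_span_singleton hx0
    haveI : Nontrivial ((ℝ ∙ (x : EuclideanSpace ℝ (Fin (m + 1))))ᗮ) :=
      Module.nontrivial_of_finrank_pos (R := ℝ) (by omega)
    obtain ⟨w0, hw0⟩ := exists_ne (0 : ((ℝ ∙ (x : EuclideanSpace ℝ (Fin (m + 1))))ᗮ))
    have hw0E : (w0 : EuclideanSpace ℝ (Fin (m + 1))) ≠ 0 := by
      simpa [Submodule.coe_eq_zero] using hw0
    set wE : EuclideanSpace ℝ (Fin (m + 1)) := ‖(w0 : EuclideanSpace ℝ (Fin (m + 1)))‖⁻¹ • (w0 : EuclideanSpace ℝ (Fin (m + 1))) with hwEdef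
    have hwnorm : ‖wE‖ = 1 := norm_smul_inv_norm hw0E
    have hworth : ⟪(x : EuclideanSpace ℝ (Fin (m + 1))), wE⟫ = 0 := by
      rw [hwEdef, real_inner_smul_right]
      have := w0.2
      rw [Submodule.mem_orthogonal] at this
      rw [this _ (Submodule.mem_span_singleton_self _)]
      ring
    set wv : Fin (m + 1) → ℝ := WithLp.equiv 2 (Fin (m + 1) → ℝ) wE with hwvdef
    have hww : wv ⬝ᵥ wv = 1 := by
      rw [hwvdef, ← inner_eq_dot, real_inner_self_eq_norm_sq, hwnorm]; norm_num
    have hxw : xv ⬝ᵥ wv = 0 := by rw [hxvdef, hwvdef, ← inner_eq_dot]; exact hworth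
    have hxne : xv ⬝ᵥ xv ≠ 0 := by rw [hxx]; norm_num
    have hwne : wv ⬝ᵥ wv ≠ 0 := by rw [hww]; norm_num
    have e1 : hh xv *ᵥ xv = -xv := by
      rw [hh_mulVec, hxx]
      norm_num
      module
    have e2 : hh wv *ᵥ (-xv) = -xv := by
      rw [hh_mulVec]
      rw [dotProduct_neg, dotProduct_comm wv xv, hxw]
      norm_num
    refine ⟨hh wv * hh xv, build x x' _ ?_ ?_ ?_ ?_⟩
    · rw [transpose_mul, hh_transpose, hh_transpose, Matrix.mul_assoc,
        ← Matrix.mul_assoc (hh wv), hh_mul_self hwne, Matrix.one_mul, hh_mul_self hxne]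
    · rw [det_mul, hh_det hwne, hh_det hxne]; norm_num
    · simp only [← hxvdef, ← hxv'def]
      rw [← mulVec_mulVec, e1, e2, hxveq]
    · intro y hy
      simp only [← hxvdef, ← hxv'def]
      have hcB : xv ⬝ᵥ xv' = -1 := by rw [hxveq, dotProduct_neg, hxx]
      have key : y ⬝ᵥ ((hh wv * hh xv) *ᵥ y)
          = 1 - 2 * (y ⬝ᵥ xv) ^ 2 - 2 * (y ⬝ᵥ wv) ^ 2 := by
        rw [← mulVec_mulVec, hh_mulVec, hh_mulVec, hxx, hww]
        simp only [dotProduct_sub, sub_dotProduct, dotProduct_smul, smul_dotProduct,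
          smul_eq_mul]
        simp only [dotProduct_comm xv y, dotProduct_comm wv y, dotProduct_comm wv xv, hxw, hy]
        field_simp
        ring
      have hq := quad_ineq xv wv y hxx hww hy (by rw [hxw]; norm_num)
      rw [hxw] at hq
      rw [hcB, key]
      nlinarith [hq]
  · -- generic case
    have hne1 : xv' ≠ xv := by
      intro h
      exact hA ((WithLp.equiv 2 (Fin (m + 1) → ℝ)).injective (by rw [← hxv'def, ← hxvdef, h]))
    have hne2 : xv' ≠ -xv := by
      intro h
      refine hB ((WithLp.equiv 2 (Fin (m + 1) → ℝ)).injective ?_)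
      rw [← hxv'def, h]
      rfl
    set c : ℝ := xv ⬝ᵥ xv' with hcdef
    have hcle : c ^ 2 ≤ 1 := by
      have h0 := dot_self_nonneg (xv - c • xv')
      simp only [dotProduct_sub, sub_dotProduct, dotProduct_smul, smul_dotProduct,
        smul_eq_mul] at h0
      rw [dotProduct_comm xv' xv] at h0
      rw [← hcdef] at h0
      nlinarith [h0, hxx, hx'x']
    have hcc : c ^ 2 < 1 := by
      rcases lt_or_eq_of_le hcle with h | h
      · exact h
      · exfalso
        have hfac : (c - 1) * (c + 1) = 0 := by nlinarith [h]
        rcases mul_eq_zero.mp hfac with h1 | h1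
        · have hc1 : c = 1 := by linarith
          have hz : (xv - xv') ⬝ᵥ (xv - xv') = 0 := by
            simp only [dotProduct_sub, sub_dotProduct]
            rw [dotProduct_comm xv' xv, ← hcdef, hxx, hx'x', hc1]
            ring
          have := sub_eq_zero.mp (dotProduct_self_eq_zero.mp hz)
          exact hne1 this.symm
        · have hc1 : c = -1 := by linarith
          have hz : (xv + xv') ⬝ᵥ (xv + xv') = 0 := by
            simp only [dotProduct_add, add_dotProduct]
            rw [dotProduct_comm xv' xv, ← hcdef, hxx, hx'x', hc1]
            ring
          have h2 := dotProduct_self_eq_zero.mp hz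
          exact hne2 (by linear_combination h2)
    have hclt : c < 1 := by nlinarith [hcc]
    have hcgt : -1 < c := by nlinarith [hcc]
    set u1 : Fin (m + 1) → ℝ := xv - xv' with hu1def
    set u2 : Fin (m + 1) → ℝ := xv - c • xv' with hu2def
    have s1 : u1 ⬝ᵥ u1 = 2 - 2 * c := by
      rw [hu1def]
      simp only [dotProduct_sub, sub_dotProduct]
      rw [dotProduct_comm xv' xv, ← hcdef, hxx, hx'x']
      ring
    have s2 : u2 ⬝ᵥ u2 = 1 - c ^ 2 := by
      rw [hu2def]
      simp only [dotProduct_sub, sub_dotProduct, dotProduct_smul, smul_dotProduct, smul_eq_mul]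
      rw [dotProduct_comm xv' xv, ← hcdef, hxx, hx'x']
      ring
    have s1ne : u1 ⬝ᵥ u1 ≠ 0 := by rw [s1]; nlinarith
    have s2ne : u2 ⬝ᵥ u2 ≠ 0 := by rw [s2]; nlinarith
    have e1 : hh u1 *ᵥ xv = xv' := by
      rw [hh_mulVec, s1]
      have hd : u1 ⬝ᵥ xv = 1 - c := by
        rw [hu1def]
        simp only [sub_dotProduct]
        rw [dotProduct_comm xv' xv, ← hcdef, hxx]
      rw [hd]
      have hs : 2 * (1 - c) / (2 - 2 * c) = 1 := by
        rw [div_eq_one_iff_eq (by nlinarith)]; ring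
      rw [hs, one_smul, hu1def]
      abel
    have e2 : hh u2 *ᵥ xv' = xv' := by
      rw [hh_mulVec]
      have hd : u2 ⬝ᵥ xv' = 0 := by
        rw [hu2def]
        simp only [sub_dotProduct, smul_dotProduct, smul_eq_mul]
        rw [← hcdef, hx'x']
        ring
      rw [hd]
      norm_num
    refine ⟨hh u2 * hh u1, build x x' _ ?_ ?_ ?_ ?_⟩
    · rw [transpose_mul, hh_transpose, hh_transpose, Matrix.mul_assoc,
        ← Matrix.mul_assoc (hh u2), hh_mul_self s2ne, Matrix.one_mul, hh_mul_self s1ne]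
    · rw [det_mul, hh_det s2ne, hh_det s1ne]; norm_num
    · simp only [← hxvdef, ← hxv'def]
      rw [← mulVec_mulVec, e1, e2]
    · intro y hy
      simp only [← hxvdef, ← hxv'def]
      have key : (1 + c) * (y ⬝ᵥ ((hh u2 * hh u1) *ᵥ y))
          = (1 + c) - ((y ⬝ᵥ xv) ^ 2 + (y ⬝ᵥ xv') ^ 2 - 2 * (y ⬝ᵥ xv) * (y ⬝ᵥ xv') * c) := by
        rw [← mulVec_mulVec, hh_mulVec, hh_mulVec, s1, s2, hu1def, hu2def]
        simp only [dotProduct_sub, sub_dotProduct, dotProduct_smul, smul_dotProduct,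
          smul_eq_mul]
        simp only [dotProduct_comm xv y, dotProduct_comm xv' y, dotProduct_comm xv' xv]
        rw [← hcdef]
        simp only [hxx, hx'x', hy]
        have h1 : (2 : ℝ) - 2 * c ≠ 0 := by nlinarith
        have h2 : (1 : ℝ) - c ^ 2 ≠ 0 := by nlinarith
        have h3 : (1 : ℝ) - c ≠ 0 := by nlinarith
        field_simp
        ring
      have hq := quad_ineq xv xv' y hxx hx'x' hy hcc
      rw [← hcdef] at hq ⊢
      obtain ⟨a, ha⟩ : ∃ a, y ⬝ᵥ xv = a := ⟨_, rfl⟩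
      obtain ⟨b, hb⟩ : ∃ b, y ⬝ᵥ xv' = b := ⟨_, rfl⟩
      obtain ⟨r, hr⟩ : ∃ r, y ⬝ᵥ ((hh u2 * hh u1) *ᵥ y) = r := ⟨_, rfl⟩
      rw [ha, hb, hr] at key
      rw [ha, hb] at hq
      rw [hr]
      clear_value u2 u1 c xv' xv
      clear ha hb hr e1 e2 s1 s2 s1ne s2ne hu1def hu2def hxvdef hxv'def hcdef hy
      nlinarith [key, hq, hcgt]
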